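/- arXiv:2507.21737 — 8 statements merged into one kernel-verified Lean document; each statement's English description precedes it below -/
import Mathlib

section
/- Let F be a field with automorphisms s, g satisfying s² = g³ = (sg)² = id. Let τ, λ ∈ F* and set τ' = τ · s(λ) · (s∘g)(λ) · λ⁻¹. If ξ = τ·s(τ)·(s∘g)(τ) and ξ' = τ'·s(τ')·(s∘g)(τ'), then ξ' = ξ · λ · g(λ) · g²(λ). -/
/-- If `τ' = τ·s(λ)·(s∘g)(λ)·λ⁻¹`, `ξ = τ·s(τ)·(s∘g)(τ)` and `ξ' = τ'·s(τ')·(s∘g)(τ')`,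
then `ξ' = ξ·Norm_g(λ)`. -/
theorem stmt_2 {F : Type*} [Field F] (s g : F ≃+* F)
    (hs : ∀ x, s (s x) = x) (hg : ∀ x, g (g (g x)) = x)
    (hsg : ∀ x, s (g (s (g x))) = x)
    (τ l : F) (hτ : τ ≠ 0) (hl : l ≠ 0)
    (τ' : F) (hτ' : τ' = τ * s l * s (g l) * l⁻¹)
    (ξ : F) (hξ : ξ = τ * s τ * s (g τ))
    (ξ' : F) (hξ' : ξ' = τ' * s τ' * s (g τ')) :
    ξ' = ξ * (l * g l * g (g l)) := by
  have hsgs : ∀ x, s (g (s x)) = g (g x) := by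
    intro x
    have := hsg (g (g x))
    rw [hg] at this
    calc s (g (s x)) = s (g (s (g (g (g x))))) := by rw [hg]
    _ = g (g x) := by rw [hsg]
  have h1 : s (g (s l)) = g (g l) := hsgs l
  have h2 : s (g (s (g l))) = l := hsg l
  have hsl : s l ≠ 0 := fun h => hl (by simpa using congrArg s.symm h)
  have hsgl : s (g l) ≠ 0 := fun h => hl (by simpa using congrArg (s.trans g).symm (by simpa using h))
  subst hτ' hξ hξ'
  simp only [map_mul, map_inv₀, hs, h1, h2]
  field_simp
end

section
/- Let F be a field with an automorphism g of order 3, and let ξ, ξ' ∈ F* be fixed by g. Let R_ξ denote the 3×3 matrix with entries R_ξ[1,3] = ξ, R_ξ[2,1] = 1, R_ξ[3,2] = 1 and all other entries 0 (and similarly R_{ξ'}). Suppose A ∈ GL₃(F) and a ∈ F* satisfy a·R_ξ = A⁻¹ · R_{ξ'} · g(A), where g(A) means applying g to every entry of A. Then ξ'/ξ = a · g(a) · g²(a). -/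
/-- If `a·R_ξ = A⁻¹·R_{ξ'}·g(A)` with `A` invertible and `ξ, ξ'` fixed by `g` (of order 3),
then `ξ'/ξ = a·g(a)·g²(a)`. -/
theorem stmt_5 {F : Type*} [Field F] (g : F ≃+* F)
    (hg : ∀ x, g (g (g x)) = x)
    (ξ ξ' : F) (hξ : ξ ≠ 0) (hξ' : ξ' ≠ 0) (hgξ : g ξ = ξ) (hgξ' : g ξ' = ξ')
    (A : Matrix (Fin 3) (Fin 3) F) (hA : IsUnit A.det)
    (a : F) (ha : a ≠ 0)
    (hrel : a • (!![0, 0, ξ; 1, 0, 0; 0, 1, 0] : Matrix (Fin 3) (Fin 3) F)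
        = A⁻¹ * (!![0, 0, ξ'; 1, 0, 0; 0, 1, 0] : Matrix (Fin 3) (Fin 3) F) * A.map ⇑g) :
    ξ' / ξ = a * g a * g (g a) := by
  set R : Matrix (Fin 3) (Fin 3) F := !![0, 0, ξ; 1, 0, 0; 0, 1, 0] with hR
  set R' : Matrix (Fin 3) (Fin 3) F := !![0, 0, ξ'; 1, 0, 0; 0, 1, 0] with hR'
  have hmapR : R.map ⇑g = R := by
    ext i j
    fin_cases i <;> fin_cases j <;>
      simp [hR, Matrix.map_apply, Matrix.vecHead, Matrix.vecTail, hgξ]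
  have hmapR' : R'.map ⇑g = R' := by
    ext i j
    fin_cases i <;> fin_cases j <;>
      simp [hR', Matrix.map_apply, Matrix.vecHead, Matrix.vecTail, hgξ']
  have hmapsmul : ∀ (c : F) (M : Matrix (Fin 3) (Fin 3) F),
      (c • M).map ⇑g = g c • M.map ⇑g := by
    intro c M; ext i j; simp [Matrix.map_apply]
  have hmapmul : ∀ (M N : Matrix (Fin 3) (Fin 3) F),
      (M * N).map ⇑g = M.map ⇑g * N.map ⇑g := by
    intro M N
    exact Matrix.map_mul (f := (g : F →+* F))
  have hAA : A * A⁻¹ = 1 := Matrix.mul_nonsing_inv A hA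
  have h1 : A * (a • R) = R' * A.map ⇑g := by
    rw [hrel, ← Matrix.mul_assoc, ← Matrix.mul_assoc, hAA, Matrix.one_mul]
  have step : ∀ (c : F) (M N : Matrix (Fin 3) (Fin 3) F),
      M * (c • R) = R' * N → M.map ⇑g * (g c • R) = R' * N.map ⇑g := by
    intro c M N h
    have := congrArg (Matrix.map · ⇑g) h
    simpa [hmapmul, hmapsmul, hmapR, hmapR', Matrix.mul_smul] using this
  have h2 := step a A (A.map ⇑g) h1
  have h3 := step (g a) (A.map ⇑g) ((A.map ⇑g).map ⇑g) h2
  have hA3 : ((A.map ⇑g).map ⇑g).map ⇑g = A := by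
    ext i j; simp [Matrix.map_apply, hg]
  -- combine
  have hcomb : A * (a • R) * (g a • R) * (g (g a) • R) = R' * R' * R' * A := by
    rw [show A * (a • R) * (g a • R) = R' * (A.map ⇑g * (g a • R)) from by
      rw [h1, Matrix.mul_assoc], h2]
    rw [Matrix.mul_assoc R', Matrix.mul_assoc R', h3, hA3]
    simp only [Matrix.mul_assoc]
  have hR3 : R * (R * R) = ξ • (1 : Matrix (Fin 3) (Fin 3) F) := by
    ext i j; fin_cases i <;> fin_cases j <;>
      simp [hR, Matrix.mul_apply, Fin.sum_univ_succ, Matrix.one_apply,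
        Matrix.vecHead, Matrix.vecTail]
  have hR'3 : R' * R' * R' = ξ' • (1 : Matrix (Fin 3) (Fin 3) F) := by
    ext i j; fin_cases i <;> fin_cases j <;>
      simp [hR', Matrix.mul_apply, Fin.sum_univ_succ, Matrix.one_apply,
        Matrix.vecHead, Matrix.vecTail]
  have hL : A * (a • R) * (g a • R) * (g (g a) • R)
      = (a * g a * g (g a) * ξ) • A := by
    simp only [Matrix.mul_smul, Matrix.smul_mul, smul_smul, Matrix.mul_assoc, hR3,
      Matrix.mul_one]
    module
  have hRr : R' * R' * R' * A = ξ' • A := by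
    rw [hR'3, Matrix.smul_mul, Matrix.one_mul]
  have key : (a * g a * g (g a) * ξ) • A = ξ' • A := by
    rw [← hL, ← hRr, hcomb]
  have hAne : A ≠ 0 := by
    intro h0
    rw [h0] at hA
    simp at hA
  have heq : a * g a * g (g a) * ξ = ξ' := by
    have hz : (a * g a * g (g a) * ξ - ξ') • A = 0 := by
      rw [sub_smul, key, sub_self]
    rcases smul_eq_zero.mp hz with h | h
    · exact sub_eq_zero.mp h
    · exact absurd h hAne
  field_simp [← heq]
  rw [← heq]
  ring
end

section
/- Let F be a field with automorphisms s, g satisfying s² = g³ = (sg)² = id, and let τ, ξ ∈ F*. Then the pair of conditions [τ·ξ = s(ξ)·(s∘g²)(τ) and s(ξ) = s(τ)·τ·g(τ)] holds if and only if the pair of conditions [ξ = τ·s(τ)·(s∘g)(τ) and g(ξ) = ξ] holds. -/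
/-- The cocycle compatibility: `[τξ = s(ξ)·(s∘g²)(τ) ∧ s(ξ) = s(τ)·τ·g(τ)]` holds iff
`[ξ = τ·s(τ)·(s∘g)(τ) ∧ g(ξ) = ξ]` holds. -/
theorem stmt_6 {F : Type*} [Field F] (s g : F ≃+* F)
    (hs : ∀ x, s (s x) = x) (hg : ∀ x, g (g (g x)) = x)
    (hsg : ∀ x, s (g (s (g x))) = x)
    (τ ξ : F) (hτ : τ ≠ 0) (hξ : ξ ≠ 0) :
    (τ * ξ = s ξ * s (g (g τ)) ∧ s ξ = s τ * τ * g τ) ↔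
      (ξ = τ * s τ * s (g τ) ∧ g ξ = ξ) := by
  have h1 : ∀ x, g (s (g x)) = s x := fun x => by
    have h := congrArg s (hsg x); rwa [hs] at h
  have hgs : ∀ x, g (s x) = s (g (g x)) := fun x => by
    conv_lhs => rw [← hg x]
    rw [h1]
  constructor
  · rintro ⟨ha, hb⟩
    have hξ' : ξ = τ * s τ * s (g τ) := by
      have h := congrArg s hb
      rw [hs] at h
      rw [h, map_mul, map_mul, hs]
    refine ⟨hξ', ?_⟩
    have hξ'' : ξ = s τ * g τ * s (g (g τ)) := by
      have h : τ * ξ = τ * (s τ * g τ * s (g (g τ))) := by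
        rw [ha, hb]; ring
      exact mul_left_cancel₀ hτ h
    calc g ξ = g τ * s (g (g τ)) * s τ := by
          rw [hξ', map_mul, map_mul, hgs, h1]
      _ = ξ := by rw [hξ'']; ring
  · rintro ⟨ha, hb⟩
    have h2 : s ξ = s τ * τ * g τ := by
      rw [ha, map_mul, map_mul, hs, hs]
    refine ⟨?_, h2⟩
    have h3 : ξ = g τ * s (g (g τ)) * s τ := by
      conv_lhs => rw [← hb, ha]
      rw [map_mul, map_mul, hgs, h1]
    rw [h2, h3]; ring
end

section
/- Let L be a field with an automorphism h of order 2, and let δ, δ' ∈ L* be fixed by h. Set α = [[0, δ],[1, 0]] and α' = [[0, δ'],[1, 0]] in GL₂(L). If there exist β ∈ GL₂(L) and λ ∈ L* with λ·α = β · α' · h(β⁻¹) (h applied entrywise), then δ' = λ·h(λ)·δ. -/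
/-- If `λ·α = β·α'·h(β⁻¹)` for some invertible `β` and `λ ∈ L*`, where `α, α'` are the
standard antidiagonal matrices attached to `δ, δ'` fixed by the order-2 automorphism `h`,
then `δ' = λ·h(λ)·δ`. -/
theorem stmt_8 {L : Type*} [Field L] (h : L ≃+* L) (hh : ∀ x, h (h x) = x)
    (δ δ' : L) (hδ : δ ≠ 0) (hδ'0 : δ' ≠ 0) (hfδ : h δ = δ) (hfδ' : h δ' = δ')
    (β : Matrix (Fin 2) (Fin 2) L) (hβ : IsUnit β.det)
    (l : L) (hl : l ≠ 0)
    (hrel : l • (!![0, δ; 1, 0] : Matrix (Fin 2) (Fin 2) L)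
        = β * (!![0, δ'; 1, 0] : Matrix (Fin 2) (Fin 2) L) * (β⁻¹).map ⇑h) :
    δ' = l * h l * δ := by
  set A : Matrix (Fin 2) (Fin 2) L := !![0, δ; 1, 0] with hA
  set A' : Matrix (Fin 2) (Fin 2) L := !![0, δ'; 1, 0] with hA'
  have hinvmul : β⁻¹ * β = 1 := Matrix.nonsing_inv_mul β hβ
  have hmulinv : β * β⁻¹ = 1 := Matrix.mul_nonsing_inv β hβ
  have hcoe : ⇑h = ⇑(h : L →+* L) := rfl
  have hmapA' : A'.map ⇑h = A' := by
    ext i j; fin_cases i <;> fin_cases j <;> simp [hA', hfδ']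
  have hmapmap : ∀ M : Matrix (Fin 2) (Fin 2) L, (M.map ⇑h).map ⇑h = M := by
    intro M; ext i j; simp [Matrix.map_apply, hh]
  have hmapsmul : (l • A).map ⇑h = h l • A := by
    ext i j; fin_cases i <;> fin_cases j <;>
      simp [hA, Matrix.map_apply, hfδ, mul_comm]
  have hrel2 : h l • A = β.map ⇑h * A' * β⁻¹ := by
    rw [← hmapsmul, hrel, hcoe, Matrix.map_mul, Matrix.map_mul, ← hcoe, hmapA', hmapmap]
  have hAA : A * A = δ • 1 := by
    ext i j; fin_cases i <;> fin_cases j <;>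
      simp [hA, Matrix.mul_apply, Fin.sum_univ_two]
  have hA'A' : A' * A' = δ' • 1 := by
    ext i j; fin_cases i <;> fin_cases j <;>
      simp [hA', Matrix.mul_apply, Fin.sum_univ_two]
  have hmid : β⁻¹.map ⇑h * β.map ⇑h = 1 := by
    rw [hcoe, ← Matrix.map_mul, hinvmul]
    ext i j; fin_cases i <;> fin_cases j <;> simp [Matrix.map_apply]
  have key : (l * h l * δ) • (1 : Matrix (Fin 2) (Fin 2) L) = δ' • 1 := by
    calc (l * h l * δ) • (1 : Matrix (Fin 2) (Fin 2) L)
        = (l • A) * (h l • A) := by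
          rw [Matrix.smul_mul, Matrix.mul_smul, hAA, smul_smul, smul_smul]
      _ = (β * A' * β⁻¹.map ⇑h) * (β.map ⇑h * A' * β⁻¹) := by rw [hrel, hrel2]
      _ = β * A' * (β⁻¹.map ⇑h * β.map ⇑h) * A' * β⁻¹ := by
          simp only [Matrix.mul_assoc]
      _ = β * (A' * A') * β⁻¹ := by rw [hmid]; simp only [Matrix.mul_assoc, Matrix.one_mul]
      _ = δ' • 1 := by
          rw [hA'A', Matrix.mul_smul, Matrix.smul_mul, Matrix.mul_one, hmulinv]
  have := congrFun (congrFun (congrArg (fun M => M) key) 0) 0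
  simp [Matrix.smul_apply, Matrix.one_apply] at this
  rw [← this]
end

section
/- Let F be a field with automorphisms g and f satisfying g³ = f² = id and fgf = g². Write Norm_g(x) = x·g(x)·g²(x). Suppose μ' ∈ F* is such that Norm_g(μ') is fixed by f. Define μ = Norm_g(μ') · (μ' · f(μ'))⁻¹. Then f(μ) = μ and Norm_g(μ) = Norm_g(μ'). -/
/-- If `Norm_g(μ')` is fixed by `f`, then `μ = Norm_g(μ')·(μ'·f(μ'))⁻¹` satisfies
`f(μ) = μ` and `Norm_g(μ) = Norm_g(μ')`. -/
theorem stmt_10 {F : Type*} [Field F] (g f : F ≃+* F)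
    (hg : ∀ x, g (g (g x)) = x) (hf : ∀ x, f (f x) = x)
    (hfgf : ∀ x, f (g (f x)) = g (g x))
    (μ' : F) (hμ'0 : μ' ≠ 0)
    (hfix : f (μ' * g μ' * g (g μ')) = μ' * g μ' * g (g μ'))
    (μ : F) (hμ : μ = (μ' * g μ' * g (g μ')) * (μ' * f μ')⁻¹) :
    f μ = μ ∧ μ * g μ * g (g μ) = μ' * g μ' * g (g μ') := by
  set N := μ' * g μ' * g (g μ') with hN
  have hgne : ∀ x : F, x ≠ 0 → g x ≠ 0 := fun x hx => by
    simpa using (map_ne_zero (g : F →+* F)).mpr hx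
  have hfne : ∀ x : F, x ≠ 0 → f x ≠ 0 := fun x hx => by
    simpa using (map_ne_zero (f : F →+* F)).mpr hx
  have hN0 : N ≠ 0 :=
    mul_ne_zero (mul_ne_zero hμ'0 (hgne _ hμ'0)) (hgne _ (hgne _ hμ'0))
  have hgf : ∀ x, g (f x) = f (g (g x)) := fun x => by
    calc g (f x) = f (f (g (f x))) := (hf _).symm
    _ = f (g (g x)) := by rw [hfgf]
  -- g fixes N
  have hgN : g N = N := by
    simp only [hN, map_mul, hg]
    ring
  -- Norm_g (f μ') = N
  have hNf : f μ' * g (f μ') * g (g (f μ')) = N := by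
    rw [hgf, hgf, hg, ← map_mul, ← map_mul]
    calc f (μ' * g (g μ') * g μ') = f N := by rw [hN]; ring_nf
    _ = N := hfix
  have h1 : g μ = N * (g μ' * g (f μ'))⁻¹ := by
    rw [hμ, map_mul, hgN, map_inv₀, map_mul]
  have h2 : g (g μ) = N * (g (g μ') * g (g (f μ')))⁻¹ := by
    rw [h1, map_mul, hgN, map_inv₀, map_mul]
  constructor
  · rw [hμ, map_mul, hfix, map_inv₀, map_mul, hf]
    rw [mul_comm (f μ') μ']
  · rw [h2, h1, hμ]
    have : N * (μ' * f μ')⁻¹ * (N * (g μ' * g (f μ'))⁻¹) *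
        (N * (g (g μ') * g (g (f μ')))⁻¹) =
        N * N * N * (N * (f μ' * g (f μ') * g (g (f μ'))))⁻¹ := by
      rw [hN]
      field_simp
    rw [this, hNf]
    field_simp
end

section
/- Let F be a field with automorphisms g and f satisfying g³ = f² = id and fgf = g². Write Norm_g(x) = x·g(x)·g²(x). Suppose θ ∈ F* is such that Norm_g(θ) is fixed by f. Define θ' = Norm_g(θ) · (θ · (g∘f)(θ))⁻¹. Then (g∘f)(θ') = θ' and Norm_g(θ') = Norm_g(θ). -/
/-- If `Norm_g(θ)` is fixed by `f`, then `θ' = Norm_g(θ)·(θ·(g∘f)(θ))⁻¹` satisfies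
`(g∘f)(θ') = θ'` and `Norm_g(θ') = Norm_g(θ)`. -/
theorem stmt_11 {F : Type*} [Field F] (g f : F ≃+* F)
    (hg : ∀ x, g (g (g x)) = x) (hf : ∀ x, f (f x) = x)
    (hfgf : ∀ x, f (g (f x)) = g (g x))
    (θ : F) (hθ : θ ≠ 0)
    (hfix : f (θ * g θ * g (g θ)) = θ * g θ * g (g θ))
    (θ' : F) (hθ' : θ' = (θ * g θ * g (g θ)) * (θ * g (f θ))⁻¹) :
    g (f θ') = θ' ∧ θ' * g θ' * g (g θ') = θ * g θ * g (g θ) := by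
  have hgN : g (θ * g θ * g (g θ)) = θ * g θ * g (g θ) := by
    rw [map_mul, map_mul, hg]; ring
  have e1 : f (g θ) = g (g (f θ)) := by
    have := hfgf (f θ); rwa [hf] at this
  have e2 : f (g (g θ)) = g (f θ) := by
    have h := hfgf (f (g θ))
    rw [hf] at h
    rw [h, e1, hg]
  have hN : θ * g θ * g (g θ) ≠ 0 := by
    have h1 : g θ ≠ 0 := by simpa using hθ
    have h2 : g (g θ) ≠ 0 := by simpa using h1
    exact mul_ne_zero (mul_ne_zero hθ h1) h2
  have hu : θ * g (f θ) ≠ 0 := by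
    have : g (f θ) ≠ 0 := by simp [hθ]
    exact mul_ne_zero hθ this
  have hNf : g (f (θ * g θ * g (g θ))) = θ * g θ * g (g θ) := by rw [hfix, hgN]
  have huf : g (f (θ * g (f θ))) = θ * g (f θ) := by
    rw [map_mul f, hfgf, map_mul g, hg]; ring
  constructor
  · rw [hθ', map_mul f, map_inv₀ f, map_mul g, map_inv₀ g, hNf, huf]
  · have key : (θ * g (f θ)) * g (θ * g (f θ)) * g (g (θ * g (f θ))) =
        (θ * g θ * g (g θ)) * (θ * g θ * g (g θ)) := by
      nth_rewrite 2 [← hfix]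
      simp only [map_mul, e1, e2, hg]
      ring
    have hgu : g (θ * g (f θ)) ≠ 0 := by simpa using hu
    have hggu : g (g (θ * g (f θ))) ≠ 0 := by simpa using hgu
    have hgθ' : g θ' = (θ * g θ * g (g θ)) * (g (θ * g (f θ)))⁻¹ := by
      rw [hθ', map_mul, map_inv₀, hgN]
    have hggθ' : g (g θ') = (θ * g θ * g (g θ)) * (g (g (θ * g (f θ))))⁻¹ := by
      rw [hgθ', map_mul, map_inv₀, hgN]
    rw [hggθ', hgθ', hθ']
    have h3 : (θ * g (f θ)) * g (θ * g (f θ)) * g (g (θ * g (f θ))) ≠ 0 :=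
      mul_ne_zero (mul_ne_zero hu hgu) hggu
    apply mul_left_cancel₀ h3
    calc ((θ * g (f θ)) * g (θ * g (f θ)) * g (g (θ * g (f θ)))) *
          (θ * g θ * g (g θ) * (θ * g (f θ))⁻¹ *
            (θ * g θ * g (g θ) * (g (θ * g (f θ)))⁻¹) *
            (θ * g θ * g (g θ) * (g (g (θ * g (f θ))))⁻¹))
        = ((θ * g (f θ)) * (θ * g (f θ))⁻¹) * (g (θ * g (f θ)) * (g (θ * g (f θ)))⁻¹) *
            (g (g (θ * g (f θ))) * (g (g (θ * g (f θ))))⁻¹) *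
            (θ * g θ * g (g θ) * (θ * g θ * g (g θ)) * (θ * g θ * g (g θ))) := by ring
      _ = θ * g θ * g (g θ) * (θ * g θ * g (g θ)) * (θ * g θ * g (g θ)) := by
            rw [mul_inv_cancel₀ hu, mul_inv_cancel₀ hgu, mul_inv_cancel₀ hggu]; ring
      _ = ((θ * g (f θ)) * g (θ * g (f θ)) * g (g (θ * g (f θ)))) * (θ * g θ * g (g θ)) := by
            rw [key]
end

section
/- Let F be a field with commuting automorphisms h and u, each of order 2. Suppose a ∈ F satisfies: a·u(a) is fixed by h, and (a+1)·(u(a)+1) is fixed by h. Then h(a) = a or h(a) = u(a). -/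
/-- If commuting involutions `h, u` of a field satisfy that `a·u(a)` and
`(a+1)·(u(a)+1)` are fixed by `h`, then `h(a) = a` or `h(a) = u(a)`. -/
theorem stmt_13 {F : Type*} [Field F] (h u : F ≃+* F)
    (hh : ∀ x, h (h x) = x) (hu : ∀ x, u (u x) = x)
    (hcomm : ∀ x, h (u x) = u (h x))
    (a : F)
    (h1 : h (a * u a) = a * u a)
    (h2 : h ((a + 1) * (u a + 1)) = (a + 1) * (u a + 1)) :
    h a = a ∨ h a = u a := by
  have key : h a * h (u a) = a * u a := by rw [← map_mul, h1]
  have h2' : (h a + 1) * (h (u a) + 1) = (a + 1) * (u a + 1) := by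
    simpa using h2
  have hsum : h a + h (u a) = a + u a := by linear_combination h2' - key
  have quad : (h a - a) * (h a - u a) = 0 := by
    linear_combination (h a) * hsum - key
  rcases mul_eq_zero.mp quad with hq | hq
  · exact Or.inl (sub_eq_zero.mp hq)
  · exact Or.inr (sub_eq_zero.mp hq)
end

section
/- Let F = ℂ(t₁, t₂, t₃, s) be the field of rational functions in four variables, and let g be the ℂ-automorphism of F determined by g(t₁) = t₂, g(t₂) = t₃, g(t₃) = t₁, g(s) = s. Then s is not in the image of the norm map Norm_g : F* → F*, Norm_g(x) = x·g(x)·g²(x). That is, there is no rational function x ∈ F* with x·g(x)·g²(x) = s. -/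
open MvPolynomial

private def cycF : Fin 4 → Fin 4 := ![1, 2, 0, 3]

private lemma cycF_inj : Function.Injective cycF := by decide

private lemma deg3_eq (r : MvPolynomial (Fin 4) ℂ) :
    degreeOf 3 r
      = ((finSuccEquiv ℂ 3) ((rename ⇑(Equiv.swap (3 : Fin 4) 0)) r)).natDegree := by
  have h1 : degreeOf 3 r = degreeOf (Equiv.swap (3 : Fin 4) 0 3)
      (rename (Equiv.swap (3 : Fin 4) 0) r) :=
    (degreeOf_rename_of_injective (Equiv.swap (3 : Fin 4) 0).injective 3).symm
  rw [h1, Equiv.swap_apply_left, ← natDegree_finSuccEquiv]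

/-- degree in the last variable, multiplicative for nonzero polynomials. -/
private lemma deg3_mul (p q : MvPolynomial (Fin 4) ℂ) (hp : p ≠ 0) (hq : q ≠ 0) :
    degreeOf 3 (p * q) = degreeOf 3 p + degreeOf 3 q := by
  have hinj : Function.Injective
      (fun r : MvPolynomial (Fin 4) ℂ =>
        (finSuccEquiv ℂ 3) ((rename ⇑(Equiv.swap (3 : Fin 4) 0)) r)) :=
    (finSuccEquiv ℂ 3).injective.comp (rename_injective _ (Equiv.swap (3 : Fin 4) 0).injective)
  have hp' : (finSuccEquiv ℂ 3) ((rename ⇑(Equiv.swap (3 : Fin 4) 0)) p) ≠ 0 := by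
    intro h; apply hp; apply hinj; simpa using h
  have hq' : (finSuccEquiv ℂ 3) ((rename ⇑(Equiv.swap (3 : Fin 4) 0)) q) ≠ 0 := by
    intro h; apply hq; apply hinj; simpa using h
  rw [deg3_eq, deg3_eq, deg3_eq, map_mul, map_mul, Polynomial.natDegree_mul hp' hq']

private lemma deg3_rename (p : MvPolynomial (Fin 4) ℂ) :
    degreeOf 3 (rename cycF p) = degreeOf 3 p := by
  have := degreeOf_rename_of_injective (p := p) cycF_inj (3 : Fin 4)
  have h3 : cycF 3 = 3 := rfl
  rwa [h3] at this

/-- In `F = ℂ(t₁, t₂, t₃, s)`, for the automorphism `g` cyclically permuting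
`t₁, t₂, t₃` and fixing `s` and the constants, the element `s` is not a `g`-norm:
there is no `x ∈ F*` with `x·g(x)·g²(x) = s`. -/
theorem stmt_14
    (g : FractionRing (MvPolynomial (Fin 4) ℂ) ≃+* FractionRing (MvPolynomial (Fin 4) ℂ))
    (hg0 : g (algebraMap (MvPolynomial (Fin 4) ℂ) (FractionRing (MvPolynomial (Fin 4) ℂ)) (X 0))
        = algebraMap (MvPolynomial (Fin 4) ℂ) (FractionRing (MvPolynomial (Fin 4) ℂ)) (X 1))
    (hg1 : g (algebraMap (MvPolynomial (Fin 4) ℂ) (FractionRing (MvPolynomial (Fin 4) ℂ)) (X 1))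
        = algebraMap (MvPolynomial (Fin 4) ℂ) (FractionRing (MvPolynomial (Fin 4) ℂ)) (X 2))
    (hg2 : g (algebraMap (MvPolynomial (Fin 4) ℂ) (FractionRing (MvPolynomial (Fin 4) ℂ)) (X 2))
        = algebraMap (MvPolynomial (Fin 4) ℂ) (FractionRing (MvPolynomial (Fin 4) ℂ)) (X 0))
    (hgs : g (algebraMap (MvPolynomial (Fin 4) ℂ) (FractionRing (MvPolynomial (Fin 4) ℂ)) (X 3))
        = algebraMap (MvPolynomial (Fin 4) ℂ) (FractionRing (MvPolynomial (Fin 4) ℂ)) (X 3))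
    (hgC : ∀ z : ℂ,
        g (algebraMap (MvPolynomial (Fin 4) ℂ) (FractionRing (MvPolynomial (Fin 4) ℂ)) (C z))
        = algebraMap (MvPolynomial (Fin 4) ℂ) (FractionRing (MvPolynomial (Fin 4) ℂ)) (C z)) :
    ∀ x : FractionRing (MvPolynomial (Fin 4) ℂ), x ≠ 0 →
      x * g x * g (g x)
        ≠ algebraMap (MvPolynomial (Fin 4) ℂ) (FractionRing (MvPolynomial (Fin 4) ℂ)) (X 3) := by
  set φ := algebraMap (MvPolynomial (Fin 4) ℂ) (FractionRing (MvPolynomial (Fin 4) ℂ)) with hφ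
  have hφinj : Function.Injective φ :=
    IsFractionRing.injective (MvPolynomial (Fin 4) ℂ) (FractionRing (MvPolynomial (Fin 4) ℂ))
  -- g commutes with the variable-renaming on polynomials
  have hgX : ∀ i : Fin 4, g (φ (X i)) = φ (X (cycF i)) := by
    intro i
    fin_cases i
    · exact hg0
    · exact hg1
    · exact hg2
    · exact hgs
  have key : ∀ p : MvPolynomial (Fin 4) ℂ, g (φ p) = φ (rename cycF p) := by
    intro p
    induction p using MvPolynomial.induction_on with
    | C z => simpa [rename_C] using hgC z
    | add p q hp hq =>
        rw [φ.map_add, g.map_add, hp, hq, map_add (rename cycF), φ.map_add]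
    | mul_X p i hp =>
        rw [φ.map_mul, g.map_mul, hp, hgX, map_mul (rename cycF), rename_X, φ.map_mul]
  intro x hx hEq
  obtain ⟨P, Q, hQmem, hPQ⟩ :=
    IsFractionRing.div_surjective (A := MvPolynomial (Fin 4) ℂ) x
  have hQ : Q ≠ 0 := nonZeroDivisors.ne_zero hQmem
  have hφQ : φ Q ≠ 0 := fun h => hQ (hφinj (h.trans (map_zero φ).symm))
  have hxQ : x * φ Q = φ P := by
    rw [← hPQ]
    field_simp
    exact mul_div_cancel_right₀ _ hφQ
  have hP : P ≠ 0 := by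
    intro h
    apply hx
    rw [h, map_zero] at hxQ
    exact (mul_eq_zero.mp hxQ).resolve_right hφQ
  have hxQ1 : g x * φ (rename cycF Q) = φ (rename cycF P) := by
    have := congrArg g hxQ
    rwa [map_mul, key, key] at this
  have hxQ2 : g (g x) * φ (rename cycF (rename cycF Q)) = φ (rename cycF (rename cycF P)) := by
    have := congrArg g hxQ1
    rwa [map_mul, key, key] at this
  have h1 : φ P * φ (rename cycF P) * φ (rename cycF (rename cycF P))
      = φ (X 3) * (φ Q * φ (rename cycF Q) * φ (rename cycF (rename cycF Q))) := by
    rw [← hxQ, ← hxQ1, ← hxQ2, ← hEq]; ring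
  have hpoly : P * rename cycF P * rename cycF (rename cycF P)
      = X 3 * (Q * rename cycF Q * rename cycF (rename cycF Q)) := by
    apply hφinj
    simp only [map_mul]
    linear_combination h1
  have hQ1 : rename cycF Q ≠ 0 :=
    fun h => hQ ((rename_injective _ cycF_inj) (by simpa using h))
  have hQ2 : rename cycF (rename cycF Q) ≠ 0 :=
    fun h => hQ1 ((rename_injective _ cycF_inj) (by simpa using h))
  have hP1 : rename cycF P ≠ 0 :=
    fun h => hP ((rename_injective _ cycF_inj) (by simpa using h))
  have hP2 : rename cycF (rename cycF P) ≠ 0 :=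
    fun h => hP1 ((rename_injective _ cycF_inj) (by simpa using h))
  have hX3 : (X 3 : MvPolynomial (Fin 4) ℂ) ≠ 0 := X_ne_zero 3
  have hL : degreeOf (3 : Fin 4) (P * rename cycF P * rename cycF (rename cycF P))
      = 3 * degreeOf 3 P := by
    rw [deg3_mul _ _ (mul_ne_zero hP hP1) hP2, deg3_mul _ _ hP hP1,
      deg3_rename, deg3_rename, deg3_rename]
    ring
  have hR : degreeOf (3 : Fin 4) (X 3 * (Q * rename cycF Q * rename cycF (rename cycF Q)))
      = 1 + 3 * degreeOf 3 Q := by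
    rw [deg3_mul _ _ hX3 (mul_ne_zero (mul_ne_zero hQ hQ1) hQ2),
      deg3_mul _ _ (mul_ne_zero hQ hQ1) hQ2, deg3_mul _ _ hQ hQ1,
      deg3_rename, deg3_rename, deg3_rename]
    have hdX : degreeOf (3 : Fin 4) (X 3 : MvPolynomial (Fin 4) ℂ) = 1 := by
      classical simp [degreeOf_X]
    rw [hdX]; ring
  have := congrArg (degreeOf (3 : Fin 4)) hpoly
  rw [hL, hR] at this
  omega
end
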